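/- Let Γ, F ⊆ ℝ^n be compact disjoint sets with dimB̄(Γ) + dimH(F) < n − 1. Then there exists a unit vector v ∈ S^{n−1} such that for all x ∈ Γ, y ∈ F, and t ∈ ℝ, y ≠ x + t·v; that is, the union of all lines through points of Γ in direction v misses F. -/

import Mathlib

open MeasureTheory Filter

/-- Minimal number of `ε`-balls needed to cover `A` (junk value `0` if no finite cover exists). -/
noncomputable def coverNum {X : Type*} [MetricSpace X] (A : Set X) (ε : ℝ) : ℕ :=
  sInf {k : ℕ | ∃ t : Finset X, t.card = k ∧ A ⊆ ⋃ x ∈ t, Metric.ball x ε}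

/-- Upper box-counting (limit capacity) dimension of a set. -/
noncomputable def dimBUpper {X : Type*} [MetricSpace X] (A : Set X) : ℝ :=
  limsup (fun ε : ℝ => Real.log (coverNum A ε) / (-Real.log ε)) (nhdsWithin 0 (Set.Ioi 0))

open Set Metric
open scoped ENNReal NNReal

lemma coverNum_spec {X : Type*} [MetricSpace X] {A : Set X} (hA : IsCompact A) {ε : ℝ}
    (hε : 0 < ε) :
    ∃ T : Finset X, T.card = coverNum A ε ∧ A ⊆ ⋃ x ∈ T, Metric.ball x ε := by
  have hne : {k : ℕ | ∃ t : Finset X, t.card = k ∧ A ⊆ ⋃ x ∈ t, Metric.ball x ε}.Nonempty := by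
    obtain ⟨T, hT⟩ := hA.elim_finite_subcover (fun x : X => Metric.ball x ε)
      (fun _ => isOpen_ball) (fun x hx => Set.mem_iUnion.2 ⟨x, mem_ball_self hε⟩)
    exact ⟨T.card, T, rfl, hT⟩
  exact Nat.sInf_mem hne

lemma one_le_coverNum {X : Type*} [MetricSpace X] {A : Set X} (hA : IsCompact A)
    (hne : A.Nonempty) {ε : ℝ} (hε : 0 < ε) : 1 ≤ coverNum A ε := by
  obtain ⟨T, hT1, hT2⟩ := coverNum_spec hA hε
  rcases Nat.eq_zero_or_pos (coverNum A ε) with h | h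
  · exfalso
    rw [h, Finset.card_eq_zero] at hT1
    obtain ⟨a, ha⟩ := hne
    have := hT2 ha
    simp [hT1] at this
  · exact h

lemma coord_abs_le_norm {n : ℕ} (x : EuclideanSpace ℝ (Fin n)) (i : Fin n) : |x i| ≤ ‖x‖ := by
  rw [EuclideanSpace.norm_eq, ← Real.sqrt_sq_eq_abs]
  refine Real.sqrt_le_sqrt ?_
  have : (x i) ^ 2 = ‖x i‖ ^ 2 := by rw [Real.norm_eq_abs, sq_abs]
  rw [this]
  exact Finset.single_le_sum (f := fun j => ‖x j‖ ^ 2) (fun j _ => by positivity)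
    (Finset.mem_univ i)

lemma euclidean_coverNum_le {n : ℕ} (hn : 0 < n) {A : Set (EuclideanSpace ℝ (Fin n))} {R : ℝ}
    (hR : 1 ≤ R) (hA : A ⊆ Metric.closedBall 0 R) {ε : ℝ} (hε : 0 < ε) :
    (coverNum A ε : ℝ) ≤ (2 * (R * (n + 1) / ε) + 7) ^ (n : ℕ) := by
  classical
  set ε' : ℝ := ε / (n + 1) with hε'
  have hε'pos : 0 < ε' := by positivity
  set M : ℤ := ⌈R / ε'⌉ + 1 with hM
  have hRε' : (0:ℝ) < R / ε' := by positivity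
  have hMR : R / ε' + 1 ≤ (M : ℝ) := by
    have h : ((M:ℝ)) = (⌈R / ε'⌉ : ℝ) + 1 := by rw [hM]; push_cast; ring
    have := Int.le_ceil (R / ε')
    linarith
  have hM0 : 0 < M := by
    have : (0:ℝ) < (M:ℝ) := by linarith
    exact_mod_cast this
  set G : Finset (Fin n → ℤ) := Fintype.piFinset (fun _ => Finset.Icc (-M) M) with hG
  set c : (Fin n → ℤ) → EuclideanSpace ℝ (Fin n) :=
    fun gr => WithLp.toLp 2 (fun i => (gr i : ℝ) * ε' : Fin n → ℝ) with hc
  set T : Finset (EuclideanSpace ℝ (Fin n)) := G.image c with hT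
  have hcover : A ⊆ ⋃ x ∈ T, Metric.ball x ε := by
    intro x hx
    have hxR : ‖x‖ ≤ R := mem_closedBall_zero_iff.1 (hA hx)
    set g : Fin n → ℤ := fun i => round (x i / ε') with hg
    have habs : ∀ i, |x i / ε' - (g i : ℝ)| ≤ 1 / 2 := fun i => abs_sub_round (x i / ε')
    have hgG : g ∈ G := by
      refine Fintype.mem_piFinset.2 fun i => ?_
      rw [Finset.mem_Icc, ← abs_le]
      have h2 : |x i / ε'| ≤ R / ε' := by
        rw [abs_div, abs_of_pos hε'pos]
        gcongr
        exact (coord_abs_le_norm x i).trans hxR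
      have h1 : |(g i : ℝ)| ≤ R / ε' + 1 / 2 := by
        calc |(g i : ℝ)| ≤ |x i / ε' - (g i : ℝ)| + |x i / ε'| := by
              have := abs_add_le (x i / ε' - (g i : ℝ)) (x i / ε')
              rw [abs_sub_comm] at this
              calc |(g i : ℝ)| = |(g i : ℝ) - x i / ε' + x i / ε'| := by ring_nf
                _ ≤ |(g i : ℝ) - x i / ε'| + |x i / ε'| := abs_add_le _ _
                _ = |x i / ε' - (g i : ℝ)| + |x i / ε'| := by rw [abs_sub_comm]
          _ ≤ R / ε' + 1 / 2 := by have := habs i; linarith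
      have : |(g i : ℝ)| ≤ (M : ℝ) := by linarith
      exact_mod_cast (by push_cast; exact this : ((|g i| : ℤ) : ℝ) ≤ (M : ℝ))
    refine Set.mem_iUnion₂.2 ⟨c g, Finset.mem_image_of_mem c hgG, ?_⟩
    rw [mem_ball, EuclideanSpace.dist_eq]
    have hterm : ∀ i : Fin n, dist (x i) (c g i) ^ 2 ≤ (ε' / 2) ^ 2 := by
      intro i
      have h3 : dist (x i) (c g i) ≤ ε' / 2 := by
        rw [Real.dist_eq]
        have : x i - c g i = (x i / ε' - (g i : ℝ)) * ε' := by
          show x i - (g i : ℝ) * ε' = _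
          rw [sub_mul, div_mul_cancel₀ _ hε'pos.ne']
        rw [this, abs_mul, abs_of_pos hε'pos]
        calc |x i / ε' - (g i : ℝ)| * ε' ≤ (1 / 2) * ε' :=
              mul_le_mul_of_nonneg_right (habs i) hε'pos.le
          _ = ε' / 2 := by ring
      exact pow_le_pow_left₀ dist_nonneg h3 2
    have hsum : (∑ i, dist (x i) (c g i) ^ 2) ≤ (n : ℝ) * (ε' / 2) ^ 2 := by
      calc (∑ i, dist (x i) (c g i) ^ 2) ≤ (Finset.univ : Finset (Fin n)).card • ((ε' / 2) ^ 2) :=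
            Finset.sum_le_card_nsmul _ _ _ (fun i _ => hterm i)
        _ = (n : ℝ) * (ε' / 2) ^ 2 := by simp [nsmul_eq_mul]
    calc Real.sqrt (∑ i, dist (x i) (c g i) ^ 2) ≤ Real.sqrt ((n:ℝ)^2 * (ε' / 2) ^ 2) := by
          refine Real.sqrt_le_sqrt (hsum.trans ?_)
          have : (n:ℝ) ≤ (n:ℝ)^2 := by nlinarith [(Nat.one_le_cast (α := ℝ)).2 hn]
          nlinarith [sq_nonneg (ε' / 2)]
      _ = (n : ℝ) * (ε' / 2) := by
          rw [← mul_pow, Real.sqrt_sq (by positivity)]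
      _ < ε := by
          have h : (n:ℝ) * (ε' / 2) = ε * ((n:ℝ) / (2 * ((n:ℝ) + 1))) := by
            rw [hε']; field_simp
          have hq : (n:ℝ) / (2 * ((n:ℝ) + 1)) < 1 := by
            rw [div_lt_one (by positivity)]
            have : (0:ℝ) ≤ (n:ℝ) := Nat.cast_nonneg n
            linarith
          calc (n:ℝ) * (ε' / 2) = ε * ((n:ℝ) / (2 * ((n:ℝ) + 1))) := h
            _ < ε * 1 := mul_lt_mul_of_pos_left hq hε
            _ = ε := mul_one ε
  -- cardinality
  have hle : coverNum A ε ≤ T.card := Nat.sInf_le ⟨T, rfl, hcover⟩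
  have hTG : (T.card : ℝ) ≤ (G.card : ℝ) := by exact_mod_cast Finset.card_image_le
  have hGcard : (G.card : ℝ) = ((2 * M + 1).toNat : ℝ) ^ (n : ℕ) := by
    rw [hG, Fintype.card_piFinset]
    simp [Int.card_Icc]
    rw [show M + 1 + M = 2 * M + 1 from by omega]
  have hMbound : ((2 * M + 1).toNat : ℝ) ≤ 2 * (R * (n + 1) / ε) + 7 := by
    have h1 : ((2 * M + 1).toNat : ℝ) = 2 * (M : ℝ) + 1 := by
      have h0 : ((2 * M + 1).toNat : ℤ) = 2 * M + 1 := Int.toNat_of_nonneg (by omega)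
      have h0' := congrArg (fun z : ℤ => (z : ℝ)) h0
      push_cast at h0'
      linarith [h0']
    have h2 : (M : ℝ) ≤ R / ε' + 2 := by
      have h : ((M:ℝ)) = (⌈R / ε'⌉ : ℝ) + 1 := by rw [hM]; push_cast; ring
      have := Int.ceil_lt_add_one (R / ε')
      linarith
    have h3 : R / ε' = R * (n + 1) / ε := by
      rw [hε']; field_simp
    rw [h1]
    rw [h3] at h2
    linarith
  calc (coverNum A ε : ℝ) ≤ (T.card : ℝ) := by exact_mod_cast hle
    _ ≤ (G.card : ℝ) := hTG
    _ = ((2 * M + 1).toNat : ℝ) ^ (n : ℕ) := hGcard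
    _ ≤ (2 * (R * (n + 1) / ε) + 7) ^ (n : ℕ) :=
        pow_le_pow_left₀ (Nat.cast_nonneg _) hMbound n

/-- The set of eventual upper bounds is nonempty for a compact set in Euclidean space. -/
lemma exists_eventual_bound {n : ℕ} (hn : 0 < n) {Γ : Set (EuclideanSpace ℝ (Fin n))}
    (hΓ : IsCompact Γ) :
    ∃ a : ℝ, ∀ᶠ ε in nhdsWithin 0 (Set.Ioi (0:ℝ)),
      Real.log (coverNum Γ ε) / (-Real.log ε) ≤ a := by
  obtain ⟨R₀, hR₀⟩ := hΓ.isBounded.subset_closedBall 0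
  set R : ℝ := max R₀ 1 with hRdef
  have hR1 : 1 ≤ R := le_max_right _ _
  have hΓR : Γ ⊆ Metric.closedBall 0 R :=
    hR₀.trans (Metric.closedBall_subset_closedBall (le_max_left _ _))
  set C : ℝ := 2 * (R * (n + 1)) + 7 with hC
  have hC1 : 1 ≤ C := by nlinarith [Nat.cast_nonneg (α := ℝ) n]
  refine ⟨(n : ℝ) * (Real.log C + 1), ?_⟩
  have hmem : Set.Ioo (0:ℝ) (Real.exp (-1)) ∈ nhdsWithin 0 (Set.Ioi (0:ℝ)) :=
    Ioo_mem_nhdsGT_of_mem ⟨le_refl _, Real.exp_pos _⟩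
  filter_upwards [hmem] with ε hε
  obtain ⟨hε0, hε1⟩ := hε
  have hεlt1 : ε < 1 := lt_of_lt_of_le hε1 (by
    have := Real.exp_lt_one_iff.mpr (by norm_num : (-1:ℝ) < 0)
    linarith)
  have hlogε : 0 < -Real.log ε := by
    have := Real.log_neg hε0 hεlt1
    linarith
  have hlogε1 : 1 ≤ -Real.log ε := by
    have h := Real.log_lt_log hε0 hε1  -- log ε < log (exp (-1)) = -1
    rw [Real.log_exp] at h
    linarith
  rw [div_le_iff₀ hlogε]
  -- bound log coverNum
  have hcovle : (coverNum Γ ε : ℝ) ≤ (C / ε) ^ (n:ℕ) := by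
    refine (euclidean_coverNum_le hn hR1 hΓR hε0).trans ?_
    refine pow_le_pow_left₀ (by positivity) ?_ n
    rw [le_div_iff₀ hε0]
    have hc : (2 * (R * (n + 1) / ε) + 7) * ε = 2 * (R * ((n:ℝ) + 1)) + 7 * ε := by
      field_simp
    rw [hc, hC]
    linarith
  have hlogcov : Real.log (coverNum Γ ε) ≤ (n : ℝ) * (Real.log C - Real.log ε) := by
    rcases Nat.eq_zero_or_pos (coverNum Γ ε) with h0 | h0
    · rw [h0]
      simp only [Nat.cast_zero, Real.log_zero]
      have hlogC : 0 ≤ Real.log C := Real.log_nonneg hC1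
      have : (0:ℝ) ≤ Real.log C - Real.log ε := by linarith
      exact mul_nonneg (Nat.cast_nonneg n) this
    · calc Real.log (coverNum Γ ε) ≤ Real.log ((C / ε) ^ (n:ℕ)) := by
            refine Real.log_le_log (by exact_mod_cast h0) hcovle
        _ = (n : ℝ) * Real.log (C / ε) := by rw [Real.log_pow]
        _ = (n : ℝ) * (Real.log C - Real.log ε) := by rw [Real.log_div (by linarith) hε0.ne']
  refine hlogcov.trans ?_
  have hlogC : 0 ≤ Real.log C := Real.log_nonneg hC1
  have expand : (n : ℝ) * (Real.log C + 1) * (-Real.log ε)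
      = (n:ℝ) * (Real.log C * (-Real.log ε)) + (n:ℝ) * (-Real.log ε) := by ring
  have h1 : Real.log C ≤ Real.log C * (-Real.log ε) := le_mul_of_one_le_right hlogC hlogε1
  have hn0 : (0:ℝ) ≤ n := Nat.cast_nonneg n
  nlinarith [h1]

lemma exists_cover_bound {X : Type*} [MetricSpace X] {A : Set X} (hA : IsCompact A)
    (hne : A.Nonempty)
    (hbdd : ∃ a, ∀ᶠ ε in nhdsWithin 0 (Set.Ioi (0:ℝ)),
      Real.log (coverNum A ε) / (-Real.log ε) ≤ a)
    {s : ℝ} (hs : dimBUpper A < s) :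
    ∃ ε₀ > 0, ∀ ε : ℝ, 0 < ε → ε < ε₀ → ∃ T : Finset X,
      (A ⊆ ⋃ x ∈ T, Metric.ball x ε) ∧ ((T.card : ℝ) ≤ ε ^ (-s)) := by
  set f : ℝ → ℝ := fun ε => Real.log (coverNum A ε) / (-Real.log ε) with hf
  set S : Set ℝ := {a | ∀ᶠ ε in nhdsWithin 0 (Set.Ioi (0:ℝ)), f ε ≤ a} with hS
  have hSne : S.Nonempty := hbdd
  have hIoo : Set.Ioo (0:ℝ) 1 ∈ nhdsWithin 0 (Set.Ioi (0:ℝ)) :=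
    Ioo_mem_nhdsGT_of_mem ⟨le_refl _, one_pos⟩
  have hfnonneg : ∀ᶠ ε in nhdsWithin 0 (Set.Ioi (0:ℝ)), 0 ≤ f ε := by
    filter_upwards [hIoo] with ε hε
    obtain ⟨hε0, hε1⟩ := hε
    have h1 : (1:ℝ) ≤ (coverNum A ε : ℝ) := by exact_mod_cast one_le_coverNum hA hne hε0
    have hlog : 0 ≤ Real.log (coverNum A ε) := Real.log_nonneg h1
    have hlogε : 0 < -Real.log ε := by have := Real.log_neg hε0 hε1; linarith
    positivity
  have hSbdd : BddBelow S := by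
    refine ⟨0, fun a ha => ?_⟩
    simp only [hS, Set.mem_setOf_eq] at ha
    obtain ⟨ε, h1, h2⟩ := (ha.and hfnonneg).exists
    linarith
  have hinf : dimBUpper A = sInf S := by rw [dimBUpper, Filter.limsup_eq]
  rw [hinf] at hs
  obtain ⟨a, haS, has⟩ := (csInf_lt_iff hSbdd hSne).1 hs
  simp only [hS, Set.mem_setOf_eq] at haS
  have hev : ∀ᶠ ε in nhdsWithin 0 (Set.Ioi (0:ℝ)),
      (f ε ≤ a ∧ ε ∈ Set.Ioo (0:ℝ) 1) := haS.and (eventually_of_mem hIoo fun x hx => hx)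
  obtain ⟨V, hV, hVsub⟩ := Filter.eventually_iff_exists_mem.1 hev
  obtain ⟨δ, hδ0, hδsub⟩ := Metric.mem_nhdsWithin_iff.1 hV
  refine ⟨min δ 1, lt_min hδ0 one_pos, fun ε hε0 hεδ => ?_⟩
  have hεV : ε ∈ V := hδsub ⟨by
    rw [Metric.mem_ball, Real.dist_eq, sub_zero, abs_of_pos hε0]
    exact hεδ.trans_le (min_le_left _ _), hε0⟩
  obtain ⟨hfa, hε01⟩ := hVsub ε hεV
  obtain ⟨T, hTcard, hTcov⟩ := coverNum_spec hA hε0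
  refine ⟨T, hTcov, ?_⟩
  rw [hTcard]
  have hε1 : ε < 1 := hε01.2
  have hlogε : 0 < -Real.log ε := by have := Real.log_neg hε0 hε1; linarith
  have h1 : (1:ℝ) ≤ (coverNum A ε : ℝ) := by exact_mod_cast one_le_coverNum hA hne hε0
  have hlog : Real.log (coverNum A ε) ≤ s * (-Real.log ε) := by
    have h2 : Real.log (coverNum A ε) ≤ a * (-Real.log ε) := by
      rw [div_le_iff₀ hlogε] at hfa
      exact hfa
    have h3 : a * (-Real.log ε) ≤ s * (-Real.log ε) :=
      mul_le_mul_of_nonneg_right has.le hlogε.le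
    linarith
  have h4 : Real.log (coverNum A ε) ≤ Real.log (ε ^ (-s)) := by
    rw [Real.log_rpow hε0]
    linarith [hlog]
  exact (Real.log_le_log_iff (by linarith) (Real.rpow_pos_of_pos hε0 _)).1 h4

lemma icc_cover_bound {g : ℝ} (hg : 0 < g) :
    ∃ ε₁ > 0, ∀ ε : ℝ, 0 < ε → ε < ε₁ → ∃ T : Finset ℝ,
      (Set.Icc (0:ℝ) 1 ⊆ ⋃ x ∈ T, Metric.ball x ε) ∧ ((T.card : ℝ) ≤ ε ^ (-(1 + g))) := by
  classical
  refine ⟨min 1 ((3:ℝ) ^ (-1/g)), lt_min one_pos (Real.rpow_pos_of_pos (by norm_num) _),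
    fun ε hε0 hε1 => ?_⟩
  have hεle1 : ε ≤ 1 := (hε1.trans_le (min_le_left _ _)).le
  have hε3 : ε ≤ (3:ℝ) ^ (-1/g) := (hε1.trans_le (min_le_right _ _)).le
  set N : ℕ := ⌈1/ε⌉₊ + 1 with hN
  set T : Finset ℝ := (Finset.range N).image (fun j : ℕ => (j : ℝ) * ε) with hT
  have hcov : Set.Icc (0:ℝ) 1 ⊆ ⋃ x ∈ T, Metric.ball x ε := by
    intro x hx
    obtain ⟨hx0, hx1⟩ := hx
    set j : ℕ := ⌊x / ε⌋₊ with hj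
    have hjN : j < N := by
      have h1 : j ≤ ⌊1/ε⌋₊ := Nat.floor_le_floor (by gcongr)
      have h2 : ⌊1/ε⌋₊ ≤ ⌈1/ε⌉₊ := Nat.floor_le_ceil _
      omega
    have hd : dist x ((j:ℝ) * ε) < ε := by
      rw [Real.dist_eq]
      have h1 : (j:ℝ) * ε ≤ x := by
        rw [hj]
        calc (↑⌊x / ε⌋₊ : ℝ) * ε ≤ x / ε * ε := by
              refine mul_le_mul_of_nonneg_right (Nat.floor_le (by positivity)) hε0.le
          _ = x := by field_simp
      have h2 : x < ((j:ℝ) + 1) * ε := by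
        have := Nat.lt_floor_add_one (x / ε)
        calc x = x / ε * ε := by field_simp
          _ < ((j:ℝ) + 1) * ε := by
              refine mul_lt_mul_of_pos_right ?_ hε0
              exact_mod_cast this
      rw [abs_of_nonneg (by linarith)]
      linarith
    exact Set.mem_iUnion₂.2 ⟨(j:ℝ) * ε, Finset.mem_image_of_mem _ (Finset.mem_range.2 hjN), hd⟩
  refine ⟨T, hcov, ?_⟩
  have hcard : (T.card : ℝ) ≤ (N : ℝ) := by
    exact_mod_cast (Finset.card_image_le.trans (le_of_eq (Finset.card_range N)))
  have hNle : (N : ℝ) ≤ 1/ε + 2 := by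
    rw [hN]
    push_cast
    have := Nat.ceil_lt_add_one (by positivity : (0:ℝ) ≤ 1/ε)
    linarith
  have h3ε : (3:ℝ) ≤ ε ^ (-g) := by
    have h1 : ε ^ g ≤ ((3:ℝ) ^ (-1/g)) ^ g := Real.rpow_le_rpow hε0.le hε3 hg.le
    have h2 : ((3:ℝ) ^ (-1/g)) ^ g = 3⁻¹ := by
      rw [← Real.rpow_mul (by norm_num)]
      rw [show -1/g * g = -1 by field_simp]
      rw [Real.rpow_neg_one]
    rw [h2] at h1
    rw [Real.rpow_neg hε0.le]
    have hεg : 0 < ε ^ g := Real.rpow_pos_of_pos hε0 _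
    rw [le_inv_comm₀ (by norm_num) hεg]
    linarith
  have hsplit : ε ^ (-(1 + g)) = ε ^ (-g) * ε⁻¹ := by
    rw [show -(1+g) = -g + -1 by ring, Real.rpow_add hε0, Real.rpow_neg_one]
  calc (T.card : ℝ) ≤ (N : ℝ) := hcard
    _ ≤ 1/ε + 2 := hNle
    _ ≤ 3 * ε⁻¹ := by
        rw [one_div]
        have h2 : (2:ℝ) ≤ 2 * ε⁻¹ := by
          have : (1:ℝ) ≤ ε⁻¹ := (one_le_inv_iff₀.2 ⟨hε0, hεle1⟩)
          linarith
        linarith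
    _ ≤ ε ^ (-g) * ε⁻¹ := by
        refine mul_le_mul_of_nonneg_right h3ε (by positivity)
    _ = ε ^ (-(1 + g)) := hsplit.symm

lemma ediam_prod_le {X Y : Type*} [PseudoEMetricSpace X] [PseudoEMetricSpace Y]
    (s : Set X) (t : Set Y) :
    EMetric.diam (s ×ˢ t) ≤ max (EMetric.diam s) (EMetric.diam t) := by
  apply EMetric.diam_le
  rintro ⟨a, b⟩ ⟨ha, hb⟩ ⟨a', b'⟩ ⟨ha', hb'⟩
  rw [Prod.edist_eq]
  exact sup_le_sup (EMetric.edist_le_diam_of_mem ha ha') (EMetric.edist_le_diam_of_mem hb hb')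

lemma ediam_metric_ball_le {X : Type*} [PseudoMetricSpace X] (x : X) (ρ : ℝ) :
    EMetric.diam (Metric.ball x ρ) ≤ ENNReal.ofReal (2 * ρ) := by
  rw [← Metric.emetric_ball]
  refine le_trans EMetric.diam_ball ?_
  rw [show (2 : ℝ≥0∞) = ENNReal.ofReal 2 by simp, ← ENNReal.ofReal_mul (by norm_num)]

lemma hausdorff_prod_zero {X Y : Type*} [MetricSpace X] [MetricSpace Y]
    [MeasurableSpace Y] [BorelSpace Y]
    [MeasurableSpace (X × Y)] [BorelSpace (X × Y)]
    {A : Set X} {B : Set Y} {s t : ℝ} (hs : 0 ≤ s) (ht : 0 < t)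
    {ε₀ : ℝ} (hε₀ : 0 < ε₀)
    (hcov : ∀ ε : ℝ, 0 < ε → ε < ε₀ → ∃ T : Finset X,
      (A ⊆ ⋃ x ∈ T, Metric.ball x ε) ∧ (T.card : ℝ) ≤ ε ^ (-s))
    (hB : μH[t] B = 0) :
    μH[s + t] (A ×ˢ B) = 0 := by
  refine le_antisymm (ENNReal.le_of_forall_pos_le_add fun c hc _ => ?_) zero_le
  rw [zero_add]
  have h2st : (0:ℝ) < (2:ℝ) ^ (s + t) := Real.rpow_pos_of_pos (by norm_num) _
  set γ : ℝ := c / (3 * (2:ℝ) ^ (s + t)) with hγdef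
  have hγ : 0 < γ := div_pos hc (by positivity)
  set β : ℝ := γ ^ (1 / t) with hβdef
  have hβ : 0 < β := Real.rpow_pos_of_pos hγ _
  have hβt : β ^ t = γ := by
    rw [hβdef, ← Real.rpow_mul hγ.le, one_div, inv_mul_cancel₀ ht.ne', Real.rpow_one]
  rw [Measure.hausdorffMeasure_apply]
  refine iSup₂_le fun r hr => ?_
  -- choose δ
  set δ : ℝ := min (ε₀ / 2) ((min r 1).toReal / 2) with hδdef
  have hmr : (0:ℝ) < (min r 1).toReal := by
    refine ENNReal.toReal_pos ?_ ?_
    · exact (lt_min hr zero_lt_one).ne'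
    · exact (lt_of_le_of_lt (min_le_right _ _) (by norm_num)).ne
  have hδ0 : 0 < δ := lt_min (by linarith) (by linarith)
  have hδε₀ : δ < ε₀ := lt_of_le_of_lt (min_le_left _ _) (by linarith)
  have h2δr : ENNReal.ofReal (2 * δ) ≤ r := by
    have h1 : (2:ℝ) * δ ≤ (min r 1).toReal := by
      have := min_le_right (ε₀ / 2) ((min r 1).toReal / 2)
      linarith [this]
    calc ENNReal.ofReal (2 * δ) ≤ ENNReal.ofReal (min r 1).toReal := ENNReal.ofReal_le_ofReal h1
      _ = min r 1 := ENNReal.ofReal_toReal (lt_of_le_of_lt (min_le_right _ _) (by norm_num)).ne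
      _ ≤ r := min_le_left _ _
  -- extract a cover of B
  have h1 : (⨅ (U : ℕ → Set Y) (_ : B ⊆ ⋃ n, U n)
      (_ : ∀ n, EMetric.diam (U n) ≤ ENNReal.ofReal δ),
      ∑' n, ⨆ _ : (U n).Nonempty, EMetric.diam (U n) ^ t) < ENNReal.ofReal γ := by
    refine lt_of_le_of_lt ?_ (ENNReal.ofReal_pos.2 hγ)
    have h0 := (Measure.hausdorffMeasure_apply t B).symm.trans hB
    have h2 := le_iSup₂ (f := fun (r' : ℝ≥0∞) (_ : 0 < r') =>
      ⨅ (U : ℕ → Set Y) (_ : B ⊆ ⋃ n, U n) (_ : ∀ n, EMetric.diam (U n) ≤ r'),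
      ∑' n, ⨆ _ : (U n).Nonempty, EMetric.diam (U n) ^ t)
      (ENNReal.ofReal δ) (ENNReal.ofReal_pos.2 hδ0)
    have h2 := h2.trans h0.le
    exact h2
  simp only [iInf_lt_iff] at h1
  obtain ⟨U, hUcov, hUdiam, hUsum⟩ := h1
  have hUsum' : ∑' k, EMetric.diam (U k) ^ t < ENNReal.ofReal γ := by
    refine lt_of_le_of_lt (le_of_eq (tsum_congr fun k => ?_)) hUsum
    by_cases hne : (U k).Nonempty
    · rw [iSup_pos hne]
    · rw [iSup_neg hne, not_nonempty_iff_eq_empty.1 hne]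
      simp [ENNReal.zero_rpow_of_pos ht, EMetric.diam]
  set d : ℕ → ℝ≥0∞ := fun k => EMetric.diam (U k) with hd
  have hdle : ∀ k, d k ≤ ENNReal.ofReal δ := hUdiam
  have hdfin : ∀ k, d k ≠ ∞ := fun k => (lt_of_le_of_lt (hdle k) ENNReal.ofReal_lt_top).ne
  set η : ℕ → ℝ := fun k => min (δ / 2) (β * (2:ℝ) ^ (-(k:ℝ) / t)) with hη
  have hηpos : ∀ k, 0 < η k := fun k =>
    lt_min (by linarith) (mul_pos hβ (Real.rpow_pos_of_pos (by norm_num) _))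
  have hηδ : ∀ k, η k ≤ δ := fun k => le_trans (min_le_left _ _) (by linarith)
  set ρ : ℕ → ℝ := fun k => max (d k).toReal (η k) with hρ
  have hρpos : ∀ k, 0 < ρ k := fun k => lt_max_of_lt_right (hηpos k)
  have hρδ : ∀ k, ρ k ≤ δ := fun k =>
    max_le (ENNReal.toReal_le_of_le_ofReal hδ0.le (hdle k)) (hηδ k)
  have hρε₀ : ∀ k, ρ k < ε₀ := fun k => lt_of_le_of_lt (hρδ k) hδε₀
  choose T hTcov hTcard using fun k => hcov (ρ k) (hρpos k) (hρε₀ k)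
  set L : ℕ → List X := fun k => (T k).toList with hL
  set V : ℕ × ℕ → Set (X × Y) := fun p =>
    (if h : p.2 < (L p.1).length then Metric.ball ((L p.1).get ⟨p.2, h⟩) (ρ p.1) else ∅)
      ×ˢ U p.1 with hV
  set e : ℕ ≃ ℕ × ℕ := (Denumerable.eqv (ℕ × ℕ)).symm with he
  set W : ℕ → Set (X × Y) := fun m => V (e m) with hW
  have hWcov : A ×ˢ B ⊆ ⋃ m, W m := by
    rintro ⟨a, b⟩ ⟨ha, hb⟩
    obtain ⟨_, ⟨k, rfl⟩, hbk⟩ := hUcov hb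
    obtain ⟨x, hxT, hax⟩ := Set.mem_iUnion₂.1 (hTcov k ha)
    obtain ⟨⟨j, hj⟩, hxj⟩ := List.mem_iff_get.mp ((Finset.mem_toList).2 hxT)
    refine Set.mem_iUnion.2 ⟨e.symm (k, j), ?_⟩
    have hVkj : V (k, j) = Metric.ball x (ρ k) ×ˢ U k := by
      show (if h : (k, j).2 < (L (k, j).1).length then
          Metric.ball ((L (k, j).1).get ⟨(k, j).2, h⟩) (ρ (k, j).1) else ∅) ×ˢ U (k, j).1
        = Metric.ball x (ρ k) ×ˢ U k
      rw [dif_pos hj, hxj]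
    show (a, b) ∈ V (e (e.symm (k, j)))
    rw [Equiv.apply_symm_apply, hVkj]
    exact ⟨hax, hbk⟩
  have hdρ : ∀ k, d k ≤ ENNReal.ofReal (ρ k) := by
    intro k
    rw [← ENNReal.ofReal_toReal (hdfin k)]
    exact ENNReal.ofReal_le_ofReal (le_max_left _ _)
  have hVdiam : ∀ p, EMetric.diam (V p) ≤ ENNReal.ofReal (2 * ρ p.1) := by
    rintro ⟨k, j⟩
    refine le_trans (ediam_prod_le _ _) (max_le ?_ ?_)
    · by_cases hj : (k, j).2 < (L (k, j).1).length
      · rw [dif_pos hj]; exact ediam_metric_ball_le _ _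
      · rw [dif_neg hj]; simp [EMetric.diam]
    · refine le_trans (hdρ k) (ENNReal.ofReal_le_ofReal ?_)
      have := hρpos k; linarith
  have hWdiam : ∀ m, EMetric.diam (W m) ≤ r := by
    intro m
    refine le_trans (hVdiam (e m)) (le_trans (ENNReal.ofReal_le_ofReal ?_) h2δr)
    have := hρδ (e m).1
    linarith
  have step : (⨅ (V' : ℕ → Set (X × Y)) (_ : A ×ˢ B ⊆ ⋃ n, V' n)
      (_ : ∀ n, EMetric.diam (V' n) ≤ r),
      ∑' n, ⨆ _ : (V' n).Nonempty, EMetric.diam (V' n) ^ (s + t))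
      ≤ ∑' m, ⨆ _ : (W m).Nonempty, EMetric.diam (W m) ^ (s + t) :=
    iInf_le_of_le W (iInf_le_of_le hWcov (iInf_le_of_le hWdiam le_rfl))
  refine le_trans step ?_
  have hre : (∑' m, ⨆ _ : (W m).Nonempty, EMetric.diam (W m) ^ (s + t))
      = ∑' p : ℕ × ℕ, ⨆ _ : (V p).Nonempty, EMetric.diam (V p) ^ (s + t) :=
    e.tsum_eq (fun p => ⨆ _ : (V p).Nonempty, EMetric.diam (V p) ^ (s + t))
  rw [hre]
  have hps : (∑' (p : ℕ × ℕ), ⨆ _ : (V p).Nonempty, EMetric.diam (V p) ^ (s + t))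
      = ∑' k, ∑' j, ⨆ _ : (V (k, j)).Nonempty, EMetric.diam (V (k, j)) ^ (s + t) := by
    rw [← ENNReal.tsum_prod]
  rw [hps]
  -- block estimate
  have hblock : ∀ k, (∑' j, ⨆ _ : (V (k, j)).Nonempty, EMetric.diam (V (k, j)) ^ (s + t))
      ≤ ENNReal.ofReal ((T k).card * (2 * ρ k) ^ (s + t)) := by
    intro k
    have hz : ∀ j ∉ Finset.range (L k).length,
        (⨆ _ : (V (k, j)).Nonempty, EMetric.diam (V (k, j)) ^ (s + t)) = 0 := by
      intro j hj
      rw [Finset.mem_range, not_lt] at hj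
      have hVe : V (k, j) = ∅ := by
        show (if h : (k, j).2 < (L (k, j).1).length then
            Metric.ball ((L (k, j).1).get ⟨(k, j).2, h⟩) (ρ (k, j).1) else ∅) ×ˢ U (k, j).1 = ∅
        rw [dif_neg (not_lt.2 hj), Set.empty_prod]
      rw [iSup_neg (by rw [hVe]; exact Set.not_nonempty_empty)]
      rfl
    rw [tsum_eq_sum hz]
    refine le_trans (Finset.sum_le_card_nsmul _ _ (ENNReal.ofReal ((2 * ρ k) ^ (s + t)))
      fun j _ => ?_) ?_
    · refine iSup_le fun _ => ?_
      calc EMetric.diam (V (k, j)) ^ (s + t)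
          ≤ ENNReal.ofReal (2 * ρ k) ^ (s + t) :=
            ENNReal.rpow_le_rpow (hVdiam (k, j)) (by positivity)
        _ = ENNReal.ofReal ((2 * ρ k) ^ (s + t)) :=
            ENNReal.ofReal_rpow_of_pos (by have := hρpos k; linarith)
    · rw [Finset.card_range, nsmul_eq_mul]
      have hlen : ((L k).length : ℝ≥0∞) = ((T k).card : ℝ≥0∞) := by
        norm_cast; exact Finset.length_toList _
      rw [hlen, show ((T k).card : ℝ≥0∞) = ENNReal.ofReal ((T k).card : ℝ) by
        rw [ENNReal.ofReal_natCast], ← ENNReal.ofReal_mul (by positivity)]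
  refine le_trans (ENNReal.tsum_le_tsum hblock) ?_
  -- real estimate per k
  have hreal : ∀ k, ((T k).card : ℝ) * (2 * ρ k) ^ (s + t)
      ≤ (2:ℝ) ^ (s + t) * ((d k).toReal ^ t + η k ^ t) := by
    intro k
    have h1 : (2 * ρ k) ^ (s + t) = (2:ℝ) ^ (s + t) * ρ k ^ (s + t) :=
      Real.mul_rpow (by norm_num) (hρpos k).le
    calc ((T k).card : ℝ) * (2 * ρ k) ^ (s + t)
        ≤ ρ k ^ (-s) * ((2:ℝ) ^ (s + t) * ρ k ^ (s + t)) := by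
          rw [h1]
          exact mul_le_mul_of_nonneg_right (hTcard k) (by positivity)
      _ = (2:ℝ) ^ (s + t) * ρ k ^ t := by
          rw [mul_comm (ρ k ^ (-s)), mul_assoc, ← Real.rpow_add (hρpos k)]
          congr 2
          ring
      _ ≤ (2:ℝ) ^ (s + t) * ((d k).toReal ^ t + η k ^ t) := by
          refine mul_le_mul_of_nonneg_left ?_ h2st.le
          rcases max_cases (d k).toReal (η k) with ⟨h, _⟩ | ⟨h, _⟩ <;>
            rw [show ρ k = max (d k).toReal (η k) from rfl, h]
          · nlinarith [Real.rpow_nonneg (hηpos k).le t]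
          · nlinarith [Real.rpow_nonneg (ENNReal.toReal_nonneg (a := d k)) t]
  have hmono : ∀ k, ENNReal.ofReal (((T k).card : ℝ) * (2 * ρ k) ^ (s + t))
      ≤ ENNReal.ofReal ((2:ℝ) ^ (s + t) * (d k).toReal ^ t)
        + ENNReal.ofReal ((2:ℝ) ^ (s + t) * η k ^ t) := by
    intro k
    rw [← ENNReal.ofReal_add (by positivity) (by positivity)]
    exact ENNReal.ofReal_le_ofReal (le_trans (hreal k) (le_of_eq (by ring)))
  refine le_trans (ENNReal.tsum_le_tsum hmono) ?_
  rw [ENNReal.tsum_add]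
  -- first sum
  have hS1 : (∑' k, ENNReal.ofReal ((2:ℝ) ^ (s + t) * (d k).toReal ^ t))
      ≤ ENNReal.ofReal ((2:ℝ) ^ (s + t) * γ) := by
    have h1 : ∀ k, ENNReal.ofReal ((2:ℝ) ^ (s + t) * (d k).toReal ^ t)
        ≤ ENNReal.ofReal ((2:ℝ) ^ (s + t)) * d k ^ t := by
      intro k
      rw [ENNReal.ofReal_mul h2st.le]
      refine mul_le_mul_right ?_ _
      rw [ENNReal.toReal_rpow]
      exact ENNReal.ofReal_toReal_le
    refine le_trans (ENNReal.tsum_le_tsum h1) ?_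
    rw [ENNReal.tsum_mul_left, ENNReal.ofReal_mul h2st.le]
    exact mul_le_mul_right hUsum'.le _
  -- second sum
  have hS2 : (∑' k, ENNReal.ofReal ((2:ℝ) ^ (s + t) * η k ^ t))
      ≤ ENNReal.ofReal ((2:ℝ) ^ (s + t) * γ) * 2 := by
    have h1 : ∀ k : ℕ, ENNReal.ofReal ((2:ℝ) ^ (s + t) * η k ^ t)
        ≤ ENNReal.ofReal ((2:ℝ) ^ (s + t) * γ) * ENNReal.ofReal ((2:ℝ) ^ (-(k:ℝ))) := by
      intro k
      rw [← ENNReal.ofReal_mul (by positivity)]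
      refine ENNReal.ofReal_le_ofReal ?_
      have h2 : η k ^ t ≤ γ * (2:ℝ) ^ (-(k:ℝ)) := by
        have h3 : η k ^ t ≤ (β * (2:ℝ) ^ (-(k:ℝ) / t)) ^ t :=
          Real.rpow_le_rpow (hηpos k).le (min_le_right _ _) ht.le
        have h4 : (β * (2:ℝ) ^ (-(k:ℝ) / t)) ^ t = γ * (2:ℝ) ^ (-(k:ℝ)) := by
          rw [Real.mul_rpow hβ.le (by positivity), hβt,
            ← Real.rpow_mul (by norm_num : (0:ℝ) ≤ 2)]
          congr 2
          field_simp
        exact h4 ▸ h3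
      calc (2:ℝ) ^ (s + t) * η k ^ t ≤ (2:ℝ) ^ (s + t) * (γ * (2:ℝ) ^ (-(k:ℝ))) :=
            mul_le_mul_of_nonneg_left h2 h2st.le
        _ = (2:ℝ) ^ (s + t) * γ * (2:ℝ) ^ (-(k:ℝ)) := by ring
    refine le_trans (ENNReal.tsum_le_tsum h1) ?_
    rw [ENNReal.tsum_mul_left]
    refine mul_le_mul_right (le_of_eq ?_) _
    have h5 : ∀ k : ℕ, ENNReal.ofReal ((2:ℝ) ^ (-(k:ℝ))) = ((2:ℝ≥0∞)⁻¹) ^ k := by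
      intro k
      rw [Real.rpow_neg (by norm_num), Real.rpow_natCast, ← inv_pow,
        ENNReal.ofReal_pow (by positivity), ENNReal.ofReal_inv_of_pos (by norm_num)]
      norm_num
    rw [tsum_congr h5, ENNReal.tsum_geometric]
    rw [ENNReal.one_sub_inv_two, inv_inv]
  refine le_trans (add_le_add hS1 hS2) ?_
  have hfin : ENNReal.ofReal ((2:ℝ) ^ (s + t) * γ) + ENNReal.ofReal ((2:ℝ) ^ (s + t) * γ) * 2
      = ENNReal.ofReal ((2:ℝ) ^ (s + t) * γ) * 3 := by ring
  rw [hfin, show (3:ℝ≥0∞) = ENNReal.ofReal 3 by norm_num,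
    ← ENNReal.ofReal_mul (by positivity)]
  refine le_of_eq ?_
  rw [show (2:ℝ) ^ (s + t) * γ * 3 = (c:ℝ) by rw [hγdef]; field_simp]
  exact ENNReal.ofReal_coe_nnreal

section Lip
variable {E : Type*} [NormedAddCommGroup E] [NormedSpace ℝ E]

lemma normalize_lipschitzOnWith {δ : ℝ} (hδ : 0 < δ) :
    LipschitzOnWith (2 / δ).toNNReal (fun v : E => ‖v‖⁻¹ • v) {v : E | δ ≤ ‖v‖} := by
  refine LipschitzOnWith.of_dist_le_mul fun a ha b hb => ?_
  simp only [Set.mem_setOf_eq] at ha hb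
  have hna : 0 < ‖a‖ := lt_of_lt_of_le hδ ha
  have hnb : 0 < ‖b‖ := lt_of_lt_of_le hδ hb
  rw [dist_eq_norm, dist_eq_norm]
  have key : ‖a‖⁻¹ • a - ‖b‖⁻¹ • b = ‖a‖⁻¹ • (a - b) + (‖a‖⁻¹ - ‖b‖⁻¹) • b := by
    rw [smul_sub, sub_smul]; abel
  rw [key]
  have h1 : ‖‖a‖⁻¹ • (a - b)‖ = ‖a‖⁻¹ * ‖a - b‖ := by
    rw [norm_smul, Real.norm_eq_abs, abs_of_pos (by positivity)]
  have h2 : ‖(‖a‖⁻¹ - ‖b‖⁻¹) • b‖ ≤ ‖a‖⁻¹ * ‖a - b‖ := by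
    rw [norm_smul, Real.norm_eq_abs]
    have h3 : ‖a‖⁻¹ - ‖b‖⁻¹ = (‖b‖ - ‖a‖) / (‖a‖ * ‖b‖) := by
      field_simp
    rw [h3, abs_div, abs_of_pos (by positivity : (0:ℝ) < ‖a‖ * ‖b‖)]
    have h4 : |‖b‖ - ‖a‖| ≤ ‖a - b‖ := by
      rw [abs_sub_comm]
      exact (abs_norm_sub_norm_le a b)
    calc |‖b‖ - ‖a‖| / (‖a‖ * ‖b‖) * ‖b‖ = |‖b‖ - ‖a‖| / ‖a‖ := by field_simp
      _ ≤ ‖a - b‖ / ‖a‖ := by gcongr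
      _ = ‖a‖⁻¹ * ‖a - b‖ := by rw [div_eq_inv_mul]
  calc ‖‖a‖⁻¹ • (a - b) + (‖a‖⁻¹ - ‖b‖⁻¹) • b‖
      ≤ ‖‖a‖⁻¹ • (a - b)‖ + ‖(‖a‖⁻¹ - ‖b‖⁻¹) • b‖ := norm_add_le _ _
    _ ≤ ‖a‖⁻¹ * ‖a - b‖ + ‖a‖⁻¹ * ‖a - b‖ := by rw [h1]; linarith [h2]
    _ = 2 * ‖a‖⁻¹ * ‖a - b‖ := by ring
    _ ≤ ((2 / δ).toNNReal : ℝ) * ‖a - b‖ := by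
        refine mul_le_mul_of_nonneg_right ?_ (norm_nonneg _)
        rw [Real.coe_toNNReal _ (by positivity)]
        rw [div_eq_mul_inv]
        have : ‖a‖⁻¹ ≤ δ⁻¹ := inv_anti₀ hδ ha
        nlinarith
  
lemma sub_lipschitz : LipschitzWith 2 (fun p : E × E => p.2 - p.1) := by
  have h : LipschitzWith (1 + 1) (fun p : E × E => p.2 - p.1) :=
    LipschitzWith.sub LipschitzWith.prod_snd LipschitzWith.prod_fst
  norm_num at h
  exact h

lemma smul_lipschitzOnWith :
    LipschitzOnWith 2 (fun p : ℝ × E => p.1 • p.2)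
      (Set.Icc (0:ℝ) 1 ×ˢ {v : E | ‖v‖ ≤ 1}) := by
  refine LipschitzOnWith.of_dist_le_mul ?_
  rintro ⟨r, v⟩ ⟨hr, hv⟩ ⟨r', v'⟩ ⟨hr', hv'⟩
  simp only [Set.mem_setOf_eq, Set.mem_Icc] at hr hr' hv hv'
  rw [dist_eq_norm]
  have key : r • v - r' • v' = (r - r') • v + r' • (v - v') := by
    rw [sub_smul, smul_sub]; abel
  rw [key]
  calc ‖(r - r') • v + r' • (v - v')‖ ≤ ‖(r - r') • v‖ + ‖r' • (v - v')‖ := norm_add_le _ _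
    _ ≤ |r - r'| * 1 + 1 * ‖v - v'‖ := by
        rw [norm_smul, norm_smul, Real.norm_eq_abs, Real.norm_eq_abs]
        have e1 : |r - r'| * ‖v‖ ≤ |r - r'| * 1 :=
          mul_le_mul_of_nonneg_left hv (abs_nonneg _)
        have e2 : |r'| * ‖v - v'‖ ≤ 1 * ‖v - v'‖ := by
          refine mul_le_mul_of_nonneg_right ?_ (norm_nonneg _)
          rw [abs_of_nonneg hr'.1]; exact hr'.2
        linarith
    _ ≤ 2 * dist (r, v) (r', v') := by
        have h1 : |r - r'| ≤ dist (r, v) (r', v') := by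
          rw [Prod.dist_eq]
          exact le_max_of_le_left (le_of_eq (Real.dist_eq r r').symm)
        have h2 : ‖v - v'‖ ≤ dist (r, v) (r', v') := by
          rw [Prod.dist_eq]
          exact le_max_of_le_right (le_of_eq (dist_eq_norm v v').symm)
        push_cast
        linarith
end Lip

lemma compact_disjoint_sep {X : Type*} [MetricSpace X] {Γ F : Set X} (hΓ : IsCompact Γ)
    (hF : IsCompact F) (hdisj : Disjoint Γ F) (hΓne : Γ.Nonempty) (hFne : F.Nonempty) :
    ∃ δ > 0, ∀ x ∈ Γ, ∀ y ∈ F, δ ≤ dist x y := by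
  obtain ⟨x₀, hx₀, hmin⟩ := hΓ.exists_isMinOn hΓne
    ((continuous_infDist_pt F).continuousOn)
  have hx₀F : x₀ ∉ F := fun h => Set.disjoint_left.1 hdisj hx₀ h
  have hpos : 0 < Metric.infDist x₀ F :=
    (hF.isClosed.notMem_iff_infDist_pos hFne).1 hx₀F
  refine ⟨Metric.infDist x₀ F, hpos, fun x hx y hy => ?_⟩
  calc Metric.infDist x₀ F ≤ Metric.infDist x F := hmin hx
    _ ≤ dist x y := Metric.infDist_le_dist_of_mem hy


set_option maxHeartbeats 1000000 in
/-- If `dimB̄(Γ) + dimH(F) < n - 1` for disjoint compact sets `Γ, F ⊆ ℝⁿ`, then there is a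
direction `v` such that every line through a point of `Γ` in direction `v` misses `F`. -/
theorem exists_direction_avoiding (n : ℕ) (Γ F : Set (EuclideanSpace ℝ (Fin n)))
    (hΓ : IsCompact Γ) (hF : IsCompact F) (hdisj : Disjoint Γ F)
    (hdim : ENNReal.ofReal (dimBUpper Γ) + dimH F < (n : ENNReal) - 1) :
    ∃ v : EuclideanSpace ℝ (Fin n), ‖v‖ = 1 ∧
      ∀ x ∈ Γ, ∀ y ∈ F, ∀ t : ℝ, y ≠ x + t • v := by
  classical
  have hn2 : 2 ≤ n := by
    by_contra h
    push_neg at h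
    have hle : (n : ℝ≥0∞) ≤ 1 := by
      have h1 : n ≤ 1 := by omega
      exact_mod_cast Nat.cast_le.2 h1
    rw [tsub_eq_zero_of_le hle] at hdim
    exact (not_le.2 hdim) zero_le
  have hn0 : 0 < n := by omega
  have hunit : ∃ v : EuclideanSpace ℝ (Fin n), ‖v‖ = 1 :=
    ⟨EuclideanSpace.single (⟨0, hn0⟩ : Fin n) (1:ℝ),
      by rw [EuclideanSpace.norm_single]; norm_num⟩
  rcases Set.eq_empty_or_nonempty Γ with hΓe | hΓne
  · obtain ⟨v, hv⟩ := hunit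
    exact ⟨v, hv, by simp [hΓe]⟩
  rcases Set.eq_empty_or_nonempty F with hFe | hFne
  · obtain ⟨v, hv⟩ := hunit
    exact ⟨v, hv, by simp [hFe]⟩
  by_contra hcon
  push_neg at hcon
  -- numbers
  have hN1cast : ((n : ℝ≥0∞) - 1) = ((n - 1 : ℕ) : ℝ≥0∞) := by
    rw [ENNReal.natCast_sub, Nat.cast_one]
  have hN1fin : ((n : ℝ≥0∞) - 1) ≠ ⊤ := by
    rw [hN1cast]
    exact ENNReal.natCast_ne_top _
  have hdimFfin : dimH F ≠ ⊤ := by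
    intro h
    rw [h, add_top] at hdim
    exact (not_le.2 hdim) ((le_top).trans (le_refl _))
  set dB' : ℝ := max (dimBUpper Γ) 0 with hdB'
  have hofdB : ENNReal.ofReal (dimBUpper Γ) = ENNReal.ofReal dB' := by
    rcases le_or_gt 0 (dimBUpper Γ) with h | h
    · rw [hdB', max_eq_left h]
    · rw [hdB', max_eq_right h.le, ENNReal.ofReal_of_nonpos h.le, ENNReal.ofReal_zero]
  set hFr : ℝ := (dimH F).toReal with hhFr
  have hdim' : dB' + hFr < (n : ℝ) - 1 := by
    have h1 : (ENNReal.ofReal dB' + dimH F).toReal < ((n:ℝ≥0∞) - 1).toReal := by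
      refine (ENNReal.toReal_lt_toReal ?_ hN1fin).2 ?_
      · exact (ENNReal.add_ne_top).2 ⟨ENNReal.ofReal_ne_top, hdimFfin⟩
      · rw [← hofdB]; exact hdim
    rw [ENNReal.toReal_add ENNReal.ofReal_ne_top hdimFfin,
      ENNReal.toReal_ofReal (le_max_right _ _)] at h1
    have h2 : ((n:ℝ≥0∞) - 1).toReal = (n:ℝ) - 1 := by
      rw [hN1cast, ENNReal.toReal_natCast]
      rw [Nat.cast_sub (by omega : 1 ≤ n)]
      norm_num
    rw [h2] at h1
    exact h1
  have hdB'0 : 0 ≤ dB' := le_max_right _ _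
  have hFr0 : 0 ≤ hFr := ENNReal.toReal_nonneg
  set g : ℝ := ((n:ℝ) - 1 - (dB' + hFr)) / 8 with hgdef
  have hg : 0 < g := by rw [hgdef]; linarith
  set s : ℝ := dB' + g with hsdef
  set t : ℝ := hFr + g with htdef
  have hs0 : 0 ≤ s := by rw [hsdef]; linarith
  have ht0 : 0 < t := by rw [htdef]; linarith
  -- cover hypothesis for Γ
  have hdBs : dimBUpper Γ < s := lt_of_le_of_lt (le_max_left _ 0) (by rw [hsdef]; linarith)
  obtain ⟨ε₀, hε₀, hcov⟩ := exists_cover_bound hΓ hΓne (exists_eventual_bound hn0 hΓ) hdBs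
  -- Hausdorff measure of F vanishes at exponent t
  have hdimFt : dimH F < (t.toNNReal : ℝ≥0∞) := by
    have h1 : ((t.toNNReal : ℝ≥0∞)) = ENNReal.ofReal t := rfl
    rw [h1, ← ENNReal.ofReal_toReal hdimFfin, ← hhFr]
    exact (ENNReal.ofReal_lt_ofReal_iff ht0).2 (by rw [htdef]; linarith)
  have hμF : μH[t] F = 0 := by
    have h := hausdorffMeasure_of_dimH_lt hdimFt
    rwa [Real.coe_toNNReal _ ht0.le] at h
  have hprod : μH[s + t] (Γ ×ˢ F) = 0 := hausdorff_prod_zero hs0 ht0 hε₀ hcov hμF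
  have hdimprod : dimH (Γ ×ˢ F) ≤ ENNReal.ofReal (s + t) := by
    refine dimH_le_of_hausdorffMeasure_ne_top (d := (s+t).toNNReal) ?_
    rw [Real.coe_toNNReal _ (by linarith), hprod]
    simp
  -- the set of directions
  obtain ⟨δ₀, hδ₀, hsep⟩ := compact_disjoint_sep hΓ hF hdisj hΓne hFne
  set f : EuclideanSpace ℝ (Fin n) × EuclideanSpace ℝ (Fin n) → EuclideanSpace ℝ (Fin n) :=
    (fun v : EuclideanSpace ℝ (Fin n) => ‖v‖⁻¹ • v) ∘
      (fun p : EuclideanSpace ℝ (Fin n) × EuclideanSpace ℝ (Fin n) => p.2 - p.1) with hfdef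
  set D : Set (EuclideanSpace ℝ (Fin n)) := f '' (Γ ×ˢ F) with hD
  set Dneg : Set (EuclideanSpace ℝ (Fin n)) := (fun v => -v) '' D with hDnegdef
  have hmaps : Set.MapsTo
      (fun p : EuclideanSpace ℝ (Fin n) × EuclideanSpace ℝ (Fin n) => p.2 - p.1)
      (Γ ×ˢ F) {v | δ₀ ≤ ‖v‖} := by
    rintro ⟨x, y⟩ ⟨hx, hy⟩
    have h1 := hsep x hx y hy
    simp only [Set.mem_setOf_eq]
    calc δ₀ ≤ dist x y := h1
      _ = ‖y - x‖ := by rw [dist_comm, dist_eq_norm]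
  have hflip : LipschitzOnWith ((2/δ₀).toNNReal * 2) f (Γ ×ˢ F) :=
    (normalize_lipschitzOnWith hδ₀).comp
      (sub_lipschitz.lipschitzOnWith (s := Γ ×ˢ F)) hmaps
  have hDdim : dimH D ≤ ENNReal.ofReal (s + t) := le_trans hflip.dimH_image_le hdimprod
  have hDnegdim : dimH Dneg ≤ ENNReal.ofReal (s + t) :=
    le_trans (LipschitzWith.dimH_image_le (LipschitzWith.id.neg) D) hDdim
  have hUdim : dimH (D ∪ Dneg) ≤ ENNReal.ofReal (s + t) := by
    rw [dimH_union]; exact max_le hDdim hDnegdim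
  -- all elements of D ∪ Dneg are unit vectors
  have hDn : ∀ v ∈ D, ‖v‖ = 1 := by
    rintro v ⟨⟨x, y⟩, ⟨hx, hy⟩, rfl⟩
    have h1 : δ₀ ≤ ‖y - x‖ := by
      calc δ₀ ≤ dist x y := hsep x hx y hy
        _ = ‖y - x‖ := by rw [dist_comm, dist_eq_norm]
    have h2 : 0 < ‖y - x‖ := lt_of_lt_of_le hδ₀ h1
    show ‖‖y - x‖⁻¹ • (y - x)‖ = 1
    rw [norm_smul, Real.norm_eq_abs, abs_of_pos (by positivity), inv_mul_cancel₀ h2.ne']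
  have hDnorm : ∀ v ∈ D ∪ Dneg, ‖v‖ ≤ 1 := by
    rintro v (hv | ⟨w, hw, rfl⟩)
    · exact le_of_eq (hDn v hv)
    · rw [norm_neg]; exact le_of_eq (hDn w hw)
  -- every unit vector lies in D ∪ Dneg
  have hsphere : ∀ v : EuclideanSpace ℝ (Fin n), ‖v‖ = 1 → v ∈ D ∪ Dneg := by
    intro v hv
    obtain ⟨x, hx, y, hy, τ, hτ⟩ := hcon v hv
    have hτ0 : τ ≠ 0 := by
      rintro rfl
      rw [zero_smul, add_zero] at hτ
      exact Set.disjoint_left.1 hdisj hx (hτ ▸ hy)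
    have hyx : y - x = τ • v := by rw [hτ, add_sub_cancel_left]
    have hnorm : ‖y - x‖ = |τ| := by rw [hyx, norm_smul, Real.norm_eq_abs, hv, mul_one]
    have hfv : f (x, y) = (|τ|⁻¹ * τ) • v := by
      show ‖y - x‖⁻¹ • (y - x) = _
      rw [hnorm, hyx, smul_smul]
    rcases lt_or_gt_of_ne hτ0 with hneg | hpos
    · right
      refine ⟨f (x, y), ⟨(x, y), ⟨hx, hy⟩, rfl⟩, ?_⟩
      rw [hfv, abs_of_neg hneg, show (-τ)⁻¹ * τ = -1 by field_simp]
      simp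
    · left
      exact ⟨(x, y), ⟨hx, hy⟩, by rw [hfv, abs_of_pos hpos, inv_mul_cancel₀ hτ0, one_smul]⟩
  -- the cone over D ∪ Dneg covers the unit ball
  set m : ℝ × EuclideanSpace ℝ (Fin n) → EuclideanSpace ℝ (Fin n) :=
    fun p => p.1 • p.2 with hm
  have hball : Metric.ball (0 : EuclideanSpace ℝ (Fin n)) 1 ⊆
      {0} ∪ m '' (Set.Icc (0:ℝ) 1 ×ˢ (D ∪ Dneg)) := by
    intro z hz
    rcases eq_or_ne z 0 with rfl | hz0
    · exact Or.inl rfl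
    right
    have hz1 : ‖z‖ < 1 := by rwa [mem_ball_zero_iff] at hz
    have hzpos : 0 < ‖z‖ := norm_pos_iff.2 hz0
    have hu : ‖‖z‖⁻¹ • z‖ = 1 := by
      rw [norm_smul, Real.norm_eq_abs, abs_of_pos (by positivity), inv_mul_cancel₀ hzpos.ne']
    refine ⟨(‖z‖, ‖z‖⁻¹ • z), ⟨⟨hzpos.le, hz1.le⟩, hsphere _ hu⟩, ?_⟩
    show ‖z‖ • (‖z‖⁻¹ • z) = z
    rw [smul_smul, mul_inv_cancel₀ hzpos.ne', one_smul]
  -- second application of the product estimate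
  set t' : ℝ := s + t + g with ht'def
  have hμ2 : μH[t'] (D ∪ Dneg) = 0 := by
    have hlt : dimH (D ∪ Dneg) < (t'.toNNReal : ℝ≥0∞) := by
      refine lt_of_le_of_lt hUdim ?_
      have h1 : ((t'.toNNReal : ℝ≥0∞)) = ENNReal.ofReal t' := rfl
      rw [h1]
      refine (ENNReal.ofReal_lt_ofReal_iff (by rw [ht'def]; linarith)).2 ?_
      rw [ht'def]; linarith
    have h := hausdorffMeasure_of_dimH_lt hlt
    rwa [Real.coe_toNNReal _ (by rw [ht'def]; linarith : (0:ℝ) ≤ t')] at h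
  obtain ⟨ε₁, hε₁, hicc⟩ := icc_cover_bound hg
  have hprod2 : μH[(1+g) + t'] (Set.Icc (0:ℝ) 1 ×ˢ (D ∪ Dneg)) = 0 :=
    hausdorff_prod_zero (by linarith) (by rw [ht'def]; linarith) hε₁
      (fun ε h1 h2 => hicc ε h1 h2) hμ2
  have hdim2 : dimH (Set.Icc (0:ℝ) 1 ×ˢ (D ∪ Dneg)) ≤ ENNReal.ofReal ((1+g) + t') := by
    refine dimH_le_of_hausdorffMeasure_ne_top (d := ((1+g)+t').toNNReal) ?_
    rw [Real.coe_toNNReal _ (by rw [ht'def]; linarith), hprod2]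
    simp
  have hmlip : LipschitzOnWith 2 m (Set.Icc (0:ℝ) 1 ×ˢ (D ∪ Dneg)) := by
    refine (smul_lipschitzOnWith).mono ?_
    exact Set.prod_mono_right fun v hv => hDnorm v hv
  have himg : dimH (m '' (Set.Icc (0:ℝ) 1 ×ˢ (D ∪ Dneg))) ≤ ENNReal.ofReal ((1+g)+t') :=
    le_trans hmlip.dimH_image_le hdim2
  have hballdim : dimH (Metric.ball (0 : EuclideanSpace ℝ (Fin n)) 1) = (n : ℝ≥0∞) := by
    rw [Real.dimH_of_mem_nhds (Metric.ball_mem_nhds 0 one_pos), finrank_euclideanSpace_fin]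
  have hchain : (n : ℝ≥0∞) ≤ ENNReal.ofReal ((1+g)+t') := by
    rw [← hballdim]
    refine le_trans (dimH_mono hball) ?_
    rw [dimH_union, dimH_singleton]
    exact max_le zero_le himg
  have hfinal : ENNReal.ofReal ((1+g)+t') < (n : ℝ≥0∞) := by
    rw [← ENNReal.ofReal_natCast n]
    refine (ENNReal.ofReal_lt_ofReal_iff (by exact_mod_cast hn0)).2 ?_
    have hexp : (1+g) + t' = 1 + dB' + hFr + 4*g := by
      rw [ht'def, hsdef, htdef]; ring
    have hsum : dB' + hFr = (n:ℝ) - 1 - 8*g := by rw [hgdef]; ring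
    rw [hexp]
    linarith
  exact absurd (lt_of_le_of_lt hchain hfinal) (lt_irrefl _)
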